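/- Let E be T-universally complete with weak order unit e = Te, T strictly positive, and let S, J be conditional expectation operators on E with TS = T = ST, TJ = T = JT and JS = J = SJ. Then for all f, g ∈ L²(T), S(f·Jg) = Jg·S(f). -/

import Mathlib

open Finset

/-- The universal completion `E^u` of a Dedekind complete Riesz space with weak
order unit `e`, carrying its canonical `f`-algebra structure with `e = 1` the
multiplicative unit and weak order unit. The Riesz space `E` itself is modeled
as a Riesz subspace of `A`. -/
class FRieszSpace (A : Type*) extends CommRing A, Lattice A, Module ℝ A where
  add_le_add_left' : ∀ a b : A, a ≤ b → ∀ c : A, c + a ≤ c + b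
  mul_nonneg' : ∀ a b : A, 0 ≤ a → 0 ≤ b → 0 ≤ a * b
  smul_nonneg' : ∀ (r : ℝ) (a : A), 0 ≤ r → 0 ≤ a → 0 ≤ r • a
  inf_mul_orth : ∀ a b c : A, 0 ≤ c → a ⊓ b = 0 → (a * c) ⊓ b = 0
  one_weak_unit : ∀ a : A, (a ⊔ -a) ⊓ 1 = 0 → a = 0

variable {A : Type*} [FRieszSpace A]

/-- `E` is Dedekind complete: every nonempty subset of `E` bounded above in `E`
has a supremum in `E`. -/
def DedekindCompleteIn (E : Set A) : Prop :=
  ∀ S : Set A, S ⊆ E → S.Nonempty → (∃ b ∈ E, ∀ x ∈ S, x ≤ b) → ∃ a ∈ E, IsLUB S a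

/-- A Riesz subspace of `A` containing the weak order unit `1`. -/
structure IsRieszSubspace (E : Set A) : Prop where
  zero_mem : (0:A) ∈ E
  add_mem : ∀ x y : A, x ∈ E → y ∈ E → x + y ∈ E
  smul_mem : ∀ (r : ℝ) (x : A), x ∈ E → r • x ∈ E
  abs_mem : ∀ x : A, x ∈ E → (x ⊔ -x) ∈ E
  one_mem : (1:A) ∈ E

/-- A conditional expectation operator on `E`: a positive order continuous
linear projection fixing the weak order unit, with range a Riesz subspace. -/
structure IsCondExpOn (E : Set A) (T : A →ₗ[ℝ] A) : Prop where
  mapsTo : ∀ x ∈ E, T x ∈ E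
  positive : ∀ x : A, 0 ≤ x → 0 ≤ T x
  projection : ∀ x : A, T (T x) = T x
  unit : T 1 = 1
  range_abs : ∀ x : A, ∃ y : A, T y = (T x) ⊔ (-(T x))
  orderCont : ∀ (S : Set A) (a : A), S.Nonempty → DirectedOn (· ≤ ·) S → IsLUB S a →
      IsLUB (T '' S) (T a)

def StrictlyPositive (T : A →ₗ[ℝ] A) : Prop := ∀ x : A, 0 < x → 0 < T x

/-- `E` is `T`-universally complete: every upward directed set in `E₊` whose
image under `T` is order bounded in `A = E^u` has a supremum in `E`. -/
def TUniversallyComplete (E : Set A) (T : A →ₗ[ℝ] A) : Prop :=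
  ∀ S : Set A, S ⊆ E → S.Nonempty → DirectedOn (· ≤ ·) S → (∀ x ∈ S, 0 ≤ x) →
    BddAbove (T '' S) → ∃ a ∈ E, IsLUB S a

/-- `L²(T) = {x ∈ E : x² ∈ E}` (squares taken in the `f`-algebra `A = E^u`). -/
def L2 (E : Set A) : Set A := {x | x ∈ E ∧ x * x ∈ E}

/-- A band projection: an order projection `0 ≤ P ≤ I`, `P² = P`. -/
def IsBandProjection (P : A →ₗ[ℝ] A) : Prop :=
  (∀ x, P (P x) = P x) ∧ ∀ x : A, 0 ≤ x → 0 ≤ P x ∧ P x ≤ x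

/-- `P` is the band projection onto the band generated by `u ≥ 0`:
`P x = sup_n (x ⊓ n u)` for `x ≥ 0`. -/
def IsBandProjOnto (P : A →ₗ[ℝ] A) (u : A) : Prop :=
  IsBandProjection P ∧ ∀ x : A, 0 ≤ x → IsLUB {y | ∃ n : ℕ, y = x ⊓ (n • u)} (P x)

/-- The variance `var(x) = T (x - Tx)²`. -/
def variance (T : A →ₗ[ℝ] A) (x : A) : A := T ((x - T x) * (x - T x))

/-- `f` and `g` are `T`-conditionally independent: there are conditional
expectation operators `Tf`, `Tg` commuting with `T`, with `f`, resp. `g`, in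
their ranges, satisfying `Tf ∘ Tg = T = Tg ∘ Tf`. -/
def AreTCondIndep (E : Set A) (T : A →ₗ[ℝ] A) (f g : A) : Prop :=
  ∃ Tf Tg : A →ₗ[ℝ] A, IsCondExpOn E Tf ∧ IsCondExpOn E Tg ∧
    Tf f = f ∧ Tg g = g ∧
    T.comp Tf = T ∧ Tf.comp T = T ∧ T.comp Tg = T ∧ Tg.comp T = T ∧
    Tf.comp Tg = T ∧ Tg.comp Tf = T

/-- A family of band projections is `T`-conditionally independent: `T`
factorizes over products of the components `P i e` and `(I - P i) e`. -/
def IsTCondIndepProjFamily {ι : Type*} (T : A →ₗ[ℝ] A) (P : ι → A →ₗ[ℝ] A) : Prop :=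
  ∀ (s : Finset ι) (c : ι → Bool),
    T (∏ i ∈ s, (if c i then P i 1 else 1 - P i 1)) =
      ∏ i ∈ s, T (if c i then P i 1 else 1 - P i 1)

/-- `e`-uniform convergence of a sequence. -/
def EUnifTendsTo (x : ℕ → A) (l : A) : Prop :=
  ∀ ε : ℝ, 0 < ε → ∃ N : ℕ, ∀ n ≥ N, |x n - l| ≤ ε • (1:A)

/-- Order convergence of a sequence. -/
def OrderConvergesTo (x : ℕ → A) (l : A) : Prop :=
  ∃ d : ℕ → A, Antitone d ∧ IsGLB (Set.range d) 0 ∧ ∀ n, |x n - l| ≤ d n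

/-- `h = e^{-g}` via the functional calculus on `E^e`: for every sequence of
polynomials converging uniformly to `t ↦ exp (-t)` on `[-1,1]`, the
evaluations at `g` converge `e`-uniformly to `h`. -/
def IsExpNeg (g h : A) : Prop :=
  ∀ (d : ℕ → ℕ) (a : ℕ → ℕ → ℝ),
    (∀ ε : ℝ, 0 < ε → ∃ N : ℕ, ∀ k ≥ N, ∀ t ∈ Set.Icc (-1:ℝ) 1,
        |(∑ i ∈ Finset.range (d k), a k i * t ^ i) - Real.exp (-t)| ≤ ε) →
    EUnifTendsTo (fun k => ∑ i ∈ Finset.range (d k), a k i • g ^ i) h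



instance (priority := 100) : CovariantClass A A (· + ·) (· ≤ ·) :=
  ⟨fun c a b h => FRieszSpace.add_le_add_left' a b h c⟩

instance (priority := 100) : CovariantClass A A (Function.swap (· + ·)) (· ≤ ·) :=
  ⟨fun c a b h => by simpa [add_comm] using FRieszSpace.add_le_add_left' a b h c⟩

noncomputable instance (priority := 100) : DistribLattice A :=
  { (inferInstance : Lattice A) with
    le_sup_inf := (AddCommGroup.toDistribLattice A).le_sup_inf }

namespace FR

lemma smul_mono {r : ℝ} (hr : 0 ≤ r) {a b : A} (h : a ≤ b) : r • a ≤ r • b := by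
  have := FRieszSpace.smul_nonneg' r (b - a) hr (by simpa using h)
  rw [smul_sub] at this; exact sub_nonneg.mp this

lemma mul_mono {c : A} (hc : 0 ≤ c) {a b : A} (h : a ≤ b) : c * a ≤ c * b := by
  have := FRieszSpace.mul_nonneg' c (b - a) hc (by simpa using h)
  rw [mul_sub] at this; exact sub_nonneg.mp this

lemma smul_le_smul_right {r s : ℝ} (h : r ≤ s) {a : A} (ha : 0 ≤ a) : r • a ≤ s • a := by
  have := FRieszSpace.smul_nonneg' (s - r) a (by linarith) ha
  rw [sub_smul] at this; exact sub_nonneg.mp this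

lemma mul_nonneg {a b : A} (ha : 0 ≤ a) (hb : 0 ≤ b) : 0 ≤ a * b :=
  FRieszSpace.mul_nonneg' a b ha hb

lemma smul_nonneg {r : ℝ} {a : A} (hr : 0 ≤ r) (ha : 0 ≤ a) : 0 ≤ r • a :=
  FRieszSpace.smul_nonneg' r a hr ha

/-- `a ⊓ b = a - (a - b)⁺`. -/
lemma inf_eq_sub_posPart (a b : A) : a ⊓ b = a - (a - b)⁺ := by
  rw [posPart_def, sub_sup, sub_sub_cancel, sub_zero, inf_comm]

lemma sub_inf_eq_posPart (a b : A) : a - a ⊓ b = (a - b)⁺ := by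
  rw [inf_eq_sub_posPart]; abel

/-- `a ⊓ (b + c) ≤ a ⊓ b + a ⊓ c` for positive elements. -/
lemma inf_add_le_inf_add_inf {a b c : A} (ha : 0 ≤ a) (hb : 0 ≤ b) (hc : 0 ≤ c) :
    a ⊓ (b + c) ≤ a ⊓ b + a ⊓ c := by
  set x := a ⊓ (b + c) with hx
  have h1 : x - a ⊓ b = (x - a) ⊔ (x - b) := by
    rw [sub_eq_add_neg, neg_inf, add_sup, ← sub_eq_add_neg, ← sub_eq_add_neg]
  have h2 : x - a ⊓ b ≤ a ⊓ c := by
    rw [h1]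
    refine sup_le (le_trans ?_ (le_inf ha hc)) (le_inf ?_ ?_)
    · have : x ≤ a := inf_le_left
      simpa using this
    · exact le_trans (sub_le_self _ hb) inf_le_left
    · have : x ≤ b + c := inf_le_right
      exact sub_le_iff_le_add.mpr (by rwa [add_comm] at this)
  have := sub_le_iff_le_add.mp h2
  rwa [add_comm] at this


/-- Disjointness is preserved by natural scalar multiples. -/
lemma inf_nsmul_eq_zero {a b : A} (ha : 0 ≤ a) (hb : 0 ≤ b) (hab : a ⊓ b = 0) :
    ∀ n : ℕ, ((n : ℝ) • a) ⊓ b = 0 := by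
  intro n
  induction n with
  | zero => simpa using inf_eq_right.mpr hb
  | succ n ih =>
    have hna : (0:A) ≤ (n:ℝ) • a := smul_nonneg (by positivity) ha
    have h1 : b ⊓ ((n:ℝ) • a + a) ≤ 0 := by
      have h := inf_add_le_inf_add_inf hb hna ha
      rw [inf_comm b ((n:ℝ) • a), ih, inf_comm b a, hab, add_zero] at h
      exact h
    have hcast : ((n+1 : ℕ) : ℝ) • a = (n:ℝ) • a + a := by push_cast; rw [add_smul, one_smul]
    rw [hcast, inf_comm]
    exact le_antisymm h1 (le_inf hb (add_nonneg hna ha))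

lemma mul_eq_zero_of_inf_eq_zero {a b : A} (ha : 0 ≤ a) (hb : 0 ≤ b) (hab : a ⊓ b = 0) :
    a * b = 0 := by
  have h1 : (a * b) ⊓ b = 0 := FRieszSpace.inf_mul_orth a b b hb hab
  have h2 : b ⊓ (a * b) = 0 := by rw [inf_comm]; exact h1
  have h3 : (b * a) ⊓ (a * b) = 0 := FRieszSpace.inf_mul_orth b (a * b) a ha h2
  rw [mul_comm b a, inf_idem] at h3
  exact h3

lemma sq_nonneg' (a : A) : 0 ≤ a * a := by
  have key : 0 ≤ (a⁺ - a⁻) * (a⁺ - a⁻) := by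
    have hd : a⁺ * a⁻ = 0 := mul_eq_zero_of_inf_eq_zero (posPart_nonneg a) (negPart_nonneg a)
      (posPart_inf_negPart_eq_zero a)
    have h2 : (a⁺ - a⁻) * (a⁺ - a⁻) = a⁺ * a⁺ + a⁻ * a⁻ - 2 * (a⁺ * a⁻) := by ring
    rw [h2, hd, mul_zero, sub_zero]
    exact add_nonneg (mul_nonneg (posPart_nonneg a) (posPart_nonneg a))
      (mul_nonneg (negPart_nonneg a) (negPart_nonneg a))
  rwa [posPart_sub_negPart a] at key

lemma one_nonneg : (0:A) ≤ 1 := by simpa using sq_nonneg' (1:A)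

lemma abs_eq (a : A) : |a| = a ⊔ -a := rfl

/-- Weak unit property for positives. -/
lemma eq_zero_of_inf_one_eq_zero {c : A} (hc : 0 ≤ c) (h : c ⊓ 1 = 0) : c = 0 := by
  apply FRieszSpace.one_weak_unit
  have : c ⊔ -c = c := sup_eq_left.mpr (le_trans (neg_nonpos.mpr hc) hc)
  rw [this]; exact h

lemma posPart_eq_of_nonneg {a : A} (ha : 0 ≤ a) : a⁺ = a := posPart_eq_self.mpr ha

lemma abs_of_nonneg' {a : A} (ha : 0 ≤ a) : |a| = a :=
  sup_eq_left.mpr (le_trans (neg_nonpos.mpr ha) ha)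

lemma eq_zero_of_abs_eq_zero {a : A} (h : |a| = 0) : a = 0 := by
  have h1 : a ≤ 0 := le_trans (le_abs_self a) (le_of_eq h)
  have h2 : -a ≤ 0 := le_trans (neg_le_abs a) (le_of_eq h)
  exact le_antisymm h1 (by simpa using h2)

lemma abs_le_iff' {a b : A} : |a| ≤ b ↔ a ≤ b ∧ -a ≤ b := by
  rw [abs_eq]; exact sup_le_iff

lemma eq_of_abs_le_zero {a : A} (h : |a| ≤ 0) : a = 0 :=
  eq_zero_of_abs_eq_zero (le_antisymm h (abs_nonneg a))

/-- `|a * b| ≤ |a| * b` when `0 ≤ b`. -/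
lemma abs_mul_le {a b : A} (hb : 0 ≤ b) : |a * b| ≤ |a| * b := by
  have h1 : a * b = a⁺ * b - a⁻ * b := by rw [← sub_mul, posPart_sub_negPart]
  have h2 : |a| * b = a⁺ * b + a⁻ * b := by rw [← add_mul, posPart_add_negPart]
  rw [h1, h2, abs_le_iff']
  constructor
  · have : (0:A) ≤ a⁻ * b := mul_nonneg (negPart_nonneg a) hb
    have h3 : a⁺ * b - a⁻ * b ≤ a⁺ * b := sub_le_self _ this
    exact h3.trans (le_add_of_nonneg_right this)
  · have : (0:A) ≤ a⁺ * b := mul_nonneg (posPart_nonneg a) hb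
    rw [neg_sub]
    have h3 : a⁻ * b - a⁺ * b ≤ a⁻ * b := sub_le_self _ this
    exact h3.trans (le_add_of_nonneg_left this)

/-- disjoint positives add to their sup. -/
lemma add_eq_sup_of_inf_eq_zero {a b : A} (h : a ⊓ b = 0) : a + b = a ⊔ b := by
  have := inf_add_sup a b
  rw [h, zero_add] at this
  exact this.symm


lemma add_negPart_eq_posPart (x : A) : x + x⁻ = x⁺ :=
  eq_sub_iff_add_eq.mp (posPart_sub_negPart x).symm

lemma inf_zero_eq_neg_negPart (x : A) : x ⊓ 0 = -(x⁻) := by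
  rw [negPart_def, neg_sup, neg_neg, neg_zero]

lemma inf_one_aux (x : A) : x ⊓ 1 - x ⊓ 0 = x⁺ ⊓ 1 := by
  rw [inf_zero_eq_neg_negPart, sub_neg_eq_add, inf_add, add_negPart_eq_posPart]
  refine le_antisymm ?_ (le_inf inf_le_left
    (le_trans inf_le_right (le_add_of_nonneg_right (negPart_nonneg x))))
  have h := inf_add_le_inf_add_inf (posPart_nonneg x) (one_nonneg (A := A)) (negPart_nonneg x)
  rw [posPart_inf_negPart_eq_zero, add_zero] at h
  exact h

lemma trunc_step (z : A) (r : ℝ) :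
    z ⊓ ((r + 1) • (1:A)) - z ⊓ (r • (1:A)) = ((z - r • (1:A))⁺) ⊓ 1 := by
  have e1 : (z - r • (1:A)) ⊓ 1 = z ⊓ (r • (1:A) + 1) - r • (1:A) := by
    have h := inf_add z (r • (1:A) + 1) (-(r • (1:A)))
    simp only [← sub_eq_add_neg, add_sub_cancel_left] at h
    exact h.symm
  have e2 : (z - r • (1:A)) ⊓ 0 = z ⊓ (r • (1:A)) - r • (1:A) := by
    have h := inf_add z (r • (1:A)) (-(r • (1:A)))
    simp only [← sub_eq_add_neg, sub_self] at h
    exact h.symm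
  have h := inf_one_aux (z - r • (1:A))
  rw [e1, e2] at h
  rw [add_smul, one_smul]
  rw [← h]; abel

lemma trunc_sum (z : A) (hz : 0 ≤ z) (N : ℕ) :
    z ⊓ ((N:ℝ) • (1:A)) = ∑ i ∈ Finset.range N, (((z - (i:ℝ) • (1:A))⁺) ⊓ 1) := by
  induction N with
  | zero => simpa using inf_eq_right.mpr hz
  | succ N ih =>
    rw [Finset.sum_range_succ, ← ih]
    have hcast : ((N + 1 : ℕ) : ℝ) = (N : ℝ) + 1 := by push_cast; ring
    rw [hcast, ← trunc_step z (N:ℝ)]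
    abel

section lubs

variable {ι : Type*}

lemma isLUB_inf_range {f : ι → A} {a : A} (v : A) (h : IsLUB (Set.range f) a) :
    IsLUB (Set.range fun n => f n ⊓ v) (a ⊓ v) := by
  constructor
  · rintro x ⟨n, rfl⟩
    exact inf_le_inf_right v (h.1 ⟨n, rfl⟩)
  · intro b hb
    have hub : ∀ n, f n ⊓ v ≤ b := fun n => hb ⟨n, rfl⟩
    have key : ∀ n, f n ≤ b + (a - v)⁺ := by
      intro n
      have h1 : f n - f n ⊓ v = (f n - v)⁺ := sub_inf_eq_posPart _ _
      have h2 : (f n - v)⁺ ≤ (a - v)⁺ := posPart_mono (by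
        have := h.1 (Set.mem_range_self n); exact sub_le_sub_right this v)
      have : f n = f n ⊓ v + (f n - v)⁺ := by rw [← h1]; abel
      rw [this]
      exact add_le_add (hub n) h2
    have : a ≤ b + (a - v)⁺ := h.2 (by rintro x ⟨n, rfl⟩; exact key n)
    have h3 : a - (a - v)⁺ ≤ b := by
      rw [sub_le_iff_le_add]; exact this
    rwa [← inf_eq_sub_posPart] at h3

lemma isLUB_mul_range {f : ι → A} {a : A} {q : A} (hq0 : 0 ≤ q) (hq1 : q ≤ 1)
    (h : IsLUB (Set.range f) a) :
    IsLUB (Set.range fun n => q * f n) (q * a) := by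
  constructor
  · rintro x ⟨n, rfl⟩
    exact mul_mono hq0 (h.1 ⟨n, rfl⟩)
  · intro b hb
    have hub : ∀ n, q * f n ≤ b := fun n => hb ⟨n, rfl⟩
    have key : ∀ n, f n ≤ b + a - q * a := by
      intro n
      have hfa : f n ≤ a := h.1 ⟨n, rfl⟩
      have h1 : q * (a - f n) ≤ a - f n := by
        have := mul_nonneg (sub_nonneg.mpr hq1) (sub_nonneg.mpr hfa)
        rw [sub_mul, one_mul] at this
        exact sub_nonneg.mp this
      have h2 : q * a ≤ b + (a - f n) := by
        have : q * a = q * f n + q * (a - f n) := by ring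
        rw [this]; exact add_le_add (hub n) h1
      have h3 : q * a + f n ≤ b + a := by
        have h4 := add_le_add_left h2 (f n)
        calc q * a + f n ≤ b + (a - f n) + f n := h4
          _ = b + a := by abel
      calc f n = q * a + f n - q * a := by abel
        _ ≤ b + a - q * a := sub_le_sub_right h3 _
    have : a ≤ b + a - q * a := h.2 (by rintro x ⟨n, rfl⟩; exact key n)
    have h4 : a ≤ (b - q * a) + a := by
      calc a ≤ b + a - q * a := this
        _ = (b - q * a) + a := by abel
    have h5 : (0:A) ≤ b - q * a := (le_add_iff_nonneg_left a).mp h4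
    exact sub_nonneg.mp h5

end lubs


section subspace

variable {E : Set A} (hE : IsRieszSubspace E)
include hE

lemma neg_mem {x : A} (hx : x ∈ E) : -x ∈ E := by
  have := hE.smul_mem (-1) x hx; rwa [neg_one_smul] at this

lemma sub_mem {x y : A} (hx : x ∈ E) (hy : y ∈ E) : x - y ∈ E := by
  rw [sub_eq_add_neg]; exact hE.add_mem _ _ hx (neg_mem hE hy)

lemma abs_mem {x : A} (hx : x ∈ E) : |x| ∈ E := hE.abs_mem x hx

lemma posPart_mem {x : A} (hx : x ∈ E) : x⁺ ∈ E := by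
  have h1 : x⁺ = (1/2 : ℝ) • (x + |x|) := by
    have h2 : x + |x| = x⁺ + x⁺ := by
      rw [← posPart_add_negPart x]
      nth_rewrite 1 [← posPart_sub_negPart x]
      abel
    rw [h2, ← two_smul ℝ, smul_smul]
    norm_num
  rw [h1]
  exact hE.smul_mem _ _ (hE.add_mem _ _ hx (abs_mem hE hx))

lemma negPart_mem {x : A} (hx : x ∈ E) : x⁻ ∈ E := by
  have : x⁻ = (-x)⁺ := by rw [negPart_def, posPart_def]
  rw [this]; exact posPart_mem hE (neg_mem hE hx)

lemma inf_mem {x y : A} (hx : x ∈ E) (hy : y ∈ E) : x ⊓ y ∈ E := by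
  rw [inf_eq_sub_posPart]
  exact sub_mem hE hx (posPart_mem hE (sub_mem hE hx hy))

lemma sup_mem {x y : A} (hx : x ∈ E) (hy : y ∈ E) : x ⊔ y ∈ E := by
  have h : x ⊔ y = x + (y - x)⁺ := by
    rw [posPart_def, add_sup, add_sub_cancel, add_zero, sup_comm]
  rw [h]
  exact hE.add_mem _ _ hx (posPart_mem hE (sub_mem hE hy hx))

lemma smul_one_mem (r : ℝ) : r • (1:A) ∈ E := hE.smul_mem r 1 hE.one_mem

end subspace

section condexp

variable {E : Set A} {T : A →ₗ[ℝ] A}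

lemma Tmono (hT : IsCondExpOn E T) {a b : A} (h : a ≤ b) : T a ≤ T b := by
  have := hT.positive (b - a) (sub_nonneg.mpr h)
  rw [map_sub] at this
  exact sub_nonneg.mp this

lemma abs_map_le (hT : IsCondExpOn E T) (z : A) : |T z| ≤ T |z| := by
  rw [abs_eq, sup_le_iff]
  constructor
  · exact Tmono hT (le_abs_self z)
  · rw [← map_neg]; exact Tmono hT (neg_le_abs z)

/-- The crucial Archimedean-type property derived from `T`-universal completeness. -/
lemma arch (hE : IsRieszSubspace E) (hT : IsCondExpOn E T) (hTU : TUniversallyComplete E T)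
    {c y : A} (hc : 0 ≤ c) (hy : y ∈ E) (h : ∀ n : ℕ, (n:ℝ) • c ≤ y) : c = 0 := by
  have hcy : c ≤ y := by have := h 1; push_cast at this; simpa using this
  have hy0 : 0 ≤ y := le_trans hc hcy
  set d : ℕ → A := fun k => (1 - ((2:ℝ)^k)⁻¹ • y)⁺ with hd
  have hdE : ∀ k, d k ∈ E := fun k =>
    posPart_mem hE (sub_mem hE hE.one_mem (hE.smul_mem _ _ hy))
  have hdmono : Monotone d := by
    intro k l hkl
    apply posPart_mono
    apply sub_le_sub_left
    exact smul_le_smul_right (by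
      apply inv_anti₀ (by positivity)
      exact pow_le_pow_right₀ (by norm_num) hkl) hy0
  have hd0 : ∀ k, 0 ≤ d k := fun k => posPart_nonneg _
  have hd1 : ∀ k, d k ≤ 1 := fun k => sup_le
    (sub_le_self _ (smul_nonneg (by positivity) hy0)) (one_nonneg)
  have hsub : ∀ k, 1 - d k = (((2:ℝ)^k)⁻¹ • y) ⊓ 1 := by
    intro k
    rw [hd]
    show 1 - ((1 - ((2:ℝ)^k)⁻¹ • y) ⊔ 0) = _
    rw [sub_sup, sub_sub_cancel, sub_zero, inf_comm]
  obtain ⟨a, haE, hlub⟩ := hTU (Set.range d) (by rintro x ⟨k, rfl⟩; exact hdE k)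
    ⟨d 0, ⟨0, rfl⟩⟩ (directedOn_range.mpr hdmono.directed_le)
    (by rintro x ⟨k, rfl⟩; exact hd0 k)
    (⟨1, by rintro x ⟨z, ⟨k, rfl⟩, rfl⟩; have := Tmono hT (hd1 k); rwa [hT.unit] at this⟩)
  have ha1 : a ≤ 1 := hlub.2 (by rintro x ⟨k, rfl⟩; exact hd1 k)
  have hh0 : 0 ≤ 1 - a := sub_nonneg.mpr ha1
  have hkey : ∀ k, 1 - a ≤ ((2:ℝ)^k)⁻¹ • y := by
    intro k
    have h1 : d k ≤ a := hlub.1 ⟨k, rfl⟩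
    have h2 : 1 - a ≤ 1 - d k := sub_le_sub_left h1 1
    rw [hsub k] at h2
    exact h2.trans inf_le_left
  have hjy : ∀ j : ℕ, (j:ℝ) • (1 - a) ≤ y := by
    intro j
    have h1 : (j:ℝ) • (1 - a) ≤ (j:ℝ) • (((2:ℝ)^j)⁻¹ • y) :=
      smul_mono (by positivity) (hkey j)
    rw [smul_smul] at h1
    have h2 : ((j:ℝ) * ((2:ℝ)^j)⁻¹) • y ≤ (1:ℝ) • y := by
      refine smul_le_smul_right ?_ hy0
      rw [mul_inv_le_iff₀ (by positivity), one_mul]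
      exact_mod_cast (Nat.lt_two_pow_self (n := j)).le
    rw [one_smul] at h2
    exact h1.trans h2
  have haE' : (1:A) - a ∈ E := sub_mem hE hE.one_mem haE
  obtain ⟨b, hbE, hlub2⟩ := hTU (Set.range fun j : ℕ => (j:ℝ) • (1 - a))
    (by rintro x ⟨j, rfl⟩; exact hE.smul_mem _ _ haE')
    ⟨0, ⟨0, by simp⟩⟩
    (directedOn_range.mpr (Monotone.directed_le (by
      intro i j hij
      exact smul_le_smul_right (by exact_mod_cast hij) hh0)))
    (by rintro x ⟨j, rfl⟩; exact smul_nonneg (by positivity) hh0)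
    (⟨T y, by rintro x ⟨z, ⟨j, rfl⟩, rfl⟩; exact Tmono hT (hjy j)⟩)
  have hba : b ≤ b - (1 - a) := by
    apply hlub2.2
    rintro x ⟨j, rfl⟩
    have h1 : ((j+1 : ℕ):ℝ) • (1 - a) ≤ b := hlub2.1 ⟨j+1, rfl⟩
    have h2 : ((j+1 : ℕ):ℝ) • (1 - a) = (j:ℝ) • (1 - a) + (1 - a) := by
      push_cast; rw [add_smul, one_smul]
    rw [h2] at h1
    exact le_sub_iff_add_le.mpr h1
  have ha_eq : (1:A) - a = 0 := by
    have := sub_nonneg.mpr hba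
    have h1 : (1:A) - a ≤ 0 := by
      have h2 : b - (b - (1 - a)) ≤ 0 := by
        rw [sub_le_iff_le_add, zero_add]; exact hba
      calc (1:A) - a = b - (b - (1 - a)) := by abel
        _ ≤ 0 := h2
    exact le_antisymm h1 hh0
  have hceq : c ⊓ 1 = 0 := by
    have hub : ∀ k, d k ≤ 1 - c ⊓ 1 := by
      intro k
      have h1 : c ≤ ((2:ℝ)^k)⁻¹ • y := by
        have h2 := h (2^k)
        push_cast at h2
        have h3 := smul_mono (r := ((2:ℝ)^k)⁻¹) (by positivity) h2
        rw [smul_smul, inv_mul_cancel₀ (by positivity), one_smul] at h3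
        exact h3
      have h4 : c ⊓ 1 ≤ 1 - d k := by
        rw [hsub k]; exact inf_le_inf_right 1 h1
      rw [le_sub_iff_add_le] at h4 ⊢
      rwa [add_comm]
    have h5 : a ≤ 1 - c ⊓ 1 := hlub.2 (by rintro x ⟨k, rfl⟩; exact hub k)
    have h6 : a = 1 := by rw [← sub_eq_zero]; rw [← neg_sub]; rw [ha_eq]; simp
    rw [h6] at h5
    have h7 : c ⊓ 1 ≤ 0 := by
      have := sub_le_sub_left h5 1
      simpa using this
    exact le_antisymm h7 (le_inf hc one_nonneg)
  exact eq_zero_of_inf_one_eq_zero hc hceq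

end condexp

section main

variable {E : Set A} {T S : A →ₗ[ℝ] A}

lemma sum_le_sum'' {N : ℕ} {f g : ℕ → A} (h : ∀ i, f i ≤ g i) :
    ∑ i ∈ Finset.range N, f i ≤ ∑ i ∈ Finset.range N, g i := by
  induction N with
  | zero => simp
  | succ N ih =>
    rw [Finset.sum_range_succ, Finset.sum_range_succ]
    exact add_le_add ih (h N)

lemma posPart_eq_zero' {a : A} (h1 : 0 ≤ a⁺) (h2 : a⁺ ⊓ 1 = 0) : a ≤ 0 := by
  have := eq_zero_of_inf_one_eq_zero h1 h2
  rwa [posPart_eq_zero] at this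

lemma isLUB_trunc (hE : IsRieszSubspace E) (hT : IsCondExpOn E T)
    (hTU : TUniversallyComplete E T) {z : A} (hz : 0 ≤ z) (hzE : z ∈ E) :
    IsLUB (Set.range fun n : ℕ => z ⊓ ((n:ℝ) • (1:A))) z := by
  constructor
  · rintro x ⟨n, rfl⟩; exact inf_le_left
  · intro b hb
    set c : A := ((z - b)⁺) ⊓ 1 with hc
    have hc0 : 0 ≤ c := le_inf (posPart_nonneg _) one_nonneg
    have key : ∀ i : ℕ, c ≤ ((z - (i:ℝ) • (1:A))⁺) ⊓ 1 := by
      intro i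
      apply inf_le_inf_right
      have h1 : z - b ≤ z - z ⊓ ((i:ℝ) • (1:A)) := sub_le_sub_left (hb ⟨i, rfl⟩) z
      rw [sub_inf_eq_posPart] at h1
      have h2 : (z - b)⁺ ≤ ((z - (i:ℝ) • (1:A))⁺)⁺ := posPart_mono h1
      rwa [posPart_eq_of_nonneg (posPart_nonneg (z - (i:ℝ) • (1:A)))] at h2
    have hN : ∀ N : ℕ, (N:ℝ) • c ≤ z := by
      intro N
      have h1 : (N:ℝ) • c = ∑ _i ∈ Finset.range N, c := by
        rw [Finset.sum_const, Finset.card_range, Nat.cast_smul_eq_nsmul]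
      rw [h1]
      have h2 : ∑ _i ∈ Finset.range N, c ≤ ∑ i ∈ Finset.range N, (((z - (i:ℝ) • (1:A))⁺) ⊓ 1) :=
        sum_le_sum'' key
      calc ∑ _i ∈ Finset.range N, c
          ≤ ∑ i ∈ Finset.range N, (((z - (i:ℝ) • (1:A))⁺) ⊓ 1) := h2
        _ = z ⊓ ((N:ℝ) • (1:A)) := (trunc_sum z hz N).symm
        _ ≤ z := inf_le_left
    have hc_eq : c = 0 := arch hE hT hTU hc0 hzE hN
    have hzb : z - b ≤ 0 := posPart_eq_zero' (posPart_nonneg _) hc_eq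
    exact sub_nonpos.mp hzb

lemma fix_comp (hS : IsCondExpOn E S) {x : A} (hx : S x = x) : S |x| = |x| := by
  obtain ⟨y, hy⟩ := hS.range_abs x
  rw [hx, ← abs_eq] at hy
  calc S |x| = S (S y) := by rw [hy]
    _ = S y := hS.projection y
    _ = |x| := hy

lemma fix_posPart (hS : IsCondExpOn E S) {x : A} (hx : S x = x) : S (x⁺) = x⁺ := by
  have h1 : x⁺ = (1/2 : ℝ) • (x + |x|) := by
    have h2 : x + |x| = x⁺ + x⁺ := by
      rw [← posPart_add_negPart x]
      nth_rewrite 1 [← posPart_sub_negPart x]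
      abel
    rw [h2, ← two_smul ℝ, smul_smul]; norm_num
  rw [h1, map_smul, map_add, hx, fix_comp hS hx]

lemma fix_negPart (hS : IsCondExpOn E S) {x : A} (hx : S x = x) : S (x⁻) = x⁻ := by
  have h : x⁻ = (-x)⁺ := by rw [negPart_def, posPart_def]
  rw [h]
  exact fix_posPart hS (by rw [map_neg, hx])

lemma fix_inf (hS : IsCondExpOn E S) {x y : A} (hx : S x = x) (hy : S y = y) :
    S (x ⊓ y) = x ⊓ y := by
  rw [inf_eq_sub_posPart, map_sub, hx, fix_posPart hS (by rw [map_sub, hx, hy])]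

lemma fix_smul_one (hS : IsCondExpOn E S) (r : ℝ) : S (r • (1:A)) = r • (1:A) := by
  rw [map_smul, hS.unit]

/-- The auxiliary "infinitesimal" lemma for components. -/
lemma small_aux (hE : IsRieszSubspace E) (hT : IsCondExpOn E T)
    (hTU : TUniversallyComplete E T) {s u : A} (hs : 0 ≤ s) (hu : 0 ≤ u) {m' : ℕ}
    (h1 : s ≤ (m':ℝ) • u) (h2 : ∀ m : ℕ, s ≤ (1 - (m:ℝ) • u)⁺) : s = 0 := by
  apply arch hE hT hTU hs hE.one_mem
  intro k
  set M := k * m' with hM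
  set a : A := (M:ℝ) • u - 1 with ha
  have hneg : (1 - (M:ℝ) • u)⁺ = a⁻ := by
    rw [ha, negPart_def, posPart_def, neg_sub]
  have horth : s ⊓ a⁺ = 0 := by
    have hs2 : s ≤ a⁻ := by rw [← hneg]; exact h2 M
    refine le_antisymm ?_ (le_inf hs (posPart_nonneg _))
    calc s ⊓ a⁺ ≤ a⁻ ⊓ a⁺ := inf_le_inf_right _ hs2
      _ = 0 := by rw [inf_comm]; exact posPart_inf_negPart_eq_zero a
  have horth2 : ((k:ℝ) • s) ⊓ a⁺ = 0 := inf_nsmul_eq_zero hs (posPart_nonneg _) horth k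
  have hks : (k:ℝ) • s ≤ a⁺ + 1 := by
    have hb1 : (k:ℝ) • s ≤ (M:ℝ) • u := by
      have := smul_mono (r := (k:ℝ)) (by positivity) h1
      rw [smul_smul] at this
      rwa [hM, Nat.cast_mul]
    have hb2 : (M:ℝ) • u = a + 1 := by rw [ha]; abel
    have hb3 : a + 1 ≤ a⁺ + 1 := add_le_add_left (le_posPart a) 1
    rw [hb2] at hb1
    exact hb1.trans hb3
  have hks0 : 0 ≤ (k:ℝ) • s := smul_nonneg (by positivity) hs
  calc (k:ℝ) • s = ((k:ℝ) • s) ⊓ ((k:ℝ) • s) := (inf_idem _).symm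
    _ ≤ ((k:ℝ) • s) ⊓ (a⁺ + 1) := inf_le_inf_left _ hks
    _ ≤ ((k:ℝ) • s) ⊓ a⁺ + ((k:ℝ) • s) ⊓ 1 :=
        inf_add_le_inf_add_inf hks0 (posPart_nonneg _) one_nonneg
    _ = ((k:ℝ) • s) ⊓ 1 := by rw [horth2, zero_add]
    _ ≤ 1 := inf_le_right

/-- Existence of the band component of `1` associated with `0 ≤ u ∈ E ∩ R(S)`. -/
lemma comp_exists (hE : IsRieszSubspace E) (hT : IsCondExpOn E T)
    (hTU : TUniversallyComplete E T) (hS : IsCondExpOn E S)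
    {u : A} (hu0 : 0 ≤ u) (huE : u ∈ E) (huS : S u = u) :
    ∃ p : A, p ∈ E ∧ S p = p ∧ 0 ≤ p ∧ p ≤ 1 ∧
      IsLUB (Set.range fun m : ℕ => ((m:ℝ) • u) ⊓ 1) p ∧
      p ⊓ (1 - p) = 0 ∧ u ⊓ (1 - p) = 0 ∧ p * u = u ∧
      (∀ v, 0 ≤ v → u ⊓ v = 0 → p ⊓ v = 0 ∧ p * v = 0) := by
  set t : ℕ → A := fun m => ((m:ℝ) • u) ⊓ 1 with ht
  have ht0 : ∀ m, 0 ≤ t m := fun m => le_inf (smul_nonneg (by positivity) hu0) one_nonneg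
  have ht1 : ∀ m, t m ≤ 1 := fun m => inf_le_right
  have htE : ∀ m, t m ∈ E := fun m => inf_mem hE (hE.smul_mem _ _ huE) hE.one_mem
  have htS : ∀ m, S (t m) = t m := fun m =>
    fix_inf hS (by rw [map_smul, huS]) hS.unit
  have htmono : Monotone t := by
    intro i j hij
    exact inf_le_inf_right _ (smul_le_smul_right (by exact_mod_cast hij) hu0)
  obtain ⟨p, hpE, hlub⟩ := hTU (Set.range t) (by rintro x ⟨m, rfl⟩; exact htE m)
    ⟨t 0, ⟨0, rfl⟩⟩ (directedOn_range.mpr htmono.directed_le)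
    (by rintro x ⟨m, rfl⟩; exact ht0 m)
    (⟨1, by rintro x ⟨z, ⟨m, rfl⟩, rfl⟩; have := Tmono hT (ht1 m); rwa [hT.unit] at this⟩)
  have hp0 : 0 ≤ p := le_trans (ht0 0) (hlub.1 ⟨0, rfl⟩)
  have hp1 : p ≤ 1 := hlub.2 (by rintro x ⟨m, rfl⟩; exact ht1 m)
  have hpS : S p = p := by
    have himg : S '' Set.range t = Set.range t := by
      have hcomp : S ∘ t = t := funext htS
      rw [← Set.range_comp, hcomp]
    have hlubS := hS.orderCont (Set.range t) p ⟨t 0, ⟨0, rfl⟩⟩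
      (directedOn_range.mpr htmono.directed_le) hlub
    rw [himg] at hlubS
    exact hlubS.unique hlub
  have hsub1 : ∀ m, (1:A) - t m = (1 - (m:ℝ) • u)⁺ := by
    intro m
    rw [ht]
    show (1:A) - (((m:ℝ) • u) ⊓ 1) = _
    rw [sub_inf, sub_self, posPart_def]
  have h1p : ∀ m : ℕ, (1:A) - p ≤ (1 - (m:ℝ) • u)⁺ := by
    intro m
    rw [← hsub1 m]
    exact sub_le_sub_left (hlub.1 ⟨m, rfl⟩) 1
  have h1p0 : (0:A) ≤ 1 - p := sub_nonneg.mpr hp1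
  have hup : u ⊓ (1 - p) = 0 := by
    apply small_aux hE hT hTU (le_inf hu0 h1p0) hu0 (m' := 1)
    · push_cast; rw [one_smul]; exact inf_le_left
    · exact fun m => le_trans inf_le_right (h1p m)
  have hpp : p ⊓ (1 - p) = 0 := by
    have hlub2 := isLUB_inf_range (1 - p) hlub
    have hzero : (fun m => t m ⊓ (1 - p)) = fun _ : ℕ => (0:A) := by
      funext m
      apply small_aux hE hT hTU (le_inf (ht0 m) h1p0) hu0 (m' := m)
      · exact le_trans inf_le_left inf_le_left
      · exact fun j => le_trans inf_le_right (h1p j)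
    rw [hzero] at hlub2
    have : Set.range (fun _ : ℕ => (0:A)) = {0} := Set.range_const
    rw [this] at hlub2
    exact hlub2.unique isLUB_singleton
  have hpu : p * u = u := by
    have h1 : u * (1 - p) = 0 := mul_eq_zero_of_inf_eq_zero hu0 h1p0 hup
    have h2 : u * 1 - u * p = 0 := by rw [← mul_sub]; exact h1
    rw [mul_one] at h2
    have := sub_eq_zero.mp h2
    rw [mul_comm] at this
    exact this.symm
  refine ⟨p, hpE, hpS, hp0, hp1, hlub, hpp, hup, hpu, ?_⟩
  intro v hv huv
  have hpv : p ⊓ v = 0 := by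
    have hlub2 := isLUB_inf_range v hlub
    have hzero : (fun m => t m ⊓ v) = fun _ : ℕ => (0:A) := by
      funext m
      refine le_antisymm ?_ (le_inf (ht0 m) hv)
      calc t m ⊓ v ≤ ((m:ℝ) • u) ⊓ v := inf_le_inf_right v inf_le_left
        _ = 0 := inf_nsmul_eq_zero hu0 hv huv m
    rw [hzero] at hlub2
    rw [Set.range_const] at hlub2
    exact hlub2.unique isLUB_singleton
  exact ⟨hpv, mul_eq_zero_of_inf_eq_zero hp0 hv hpv⟩

/-- Ring multiplication commutes with ℕ-cast real scalars. -/
lemma mul_natCast_smul (n : ℕ) (a b : A) : a * ((n:ℝ) • b) = (n:ℝ) • (a * b) := by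
  rw [Nat.cast_smul_eq_nsmul, Nat.cast_smul_eq_nsmul, nsmul_eq_mul, nsmul_eq_mul, mul_left_comm]

lemma comp_mul_bounded (hS : IsCondExpOn E S) {p : A} (hpS : S p = p) (hp0 : 0 ≤ p)
    (hp1 : p ≤ 1) (hpp : p ⊓ (1 - p) = 0) {x : A} {n : ℕ} (hx0 : 0 ≤ x)
    (hxn : x ≤ (n:ℝ) • (1:A)) : S (p * x) = p * S x := by
  have h1p0 : (0:A) ≤ 1 - p := sub_nonneg.mpr hp1
  have hp2 : p * (1 - p) = 0 := mul_eq_zero_of_inf_eq_zero hp0 h1p0 hpp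
  have hA : S (p * x) ≤ (n:ℝ) • p := by
    calc S (p * x) ≤ S (p * ((n:ℝ) • (1:A))) := Tmono hS (mul_mono hp0 hxn)
      _ = S ((n:ℝ) • p) := by rw [mul_natCast_smul, mul_one]
      _ = (n:ℝ) • p := by rw [map_smul, hpS]
  have hB : (1 - p) * S (p * x) = 0 := by
    refine le_antisymm ?_ (mul_nonneg h1p0 (hS.positive _ (mul_nonneg hp0 hx0)))
    calc (1 - p) * S (p * x) ≤ (1 - p) * ((n:ℝ) • p) := mul_mono h1p0 hA
      _ = (n:ℝ) • ((1 - p) * p) := mul_natCast_smul n _ _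
      _ = 0 := by rw [mul_comm, hp2, smul_zero]
  have hC : S (p * x) = p * S (p * x) := by
    have h : S (p * x) - p * S (p * x) = (1 - p) * S (p * x) := by ring
    rw [hB] at h
    exact (sub_eq_zero.mp h)
  have hX : S ((1 - p) * x) ≤ (n:ℝ) • (1 - p) := by
    calc S ((1 - p) * x) ≤ S ((1 - p) * ((n:ℝ) • (1:A))) := Tmono hS (mul_mono h1p0 hxn)
      _ = S ((n:ℝ) • (1 - p)) := by rw [mul_natCast_smul, mul_one]
      _ = (n:ℝ) • (1 - p) := by rw [map_smul, map_sub, hS.unit, hpS]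
  have hD : p * S ((1 - p) * x) = 0 := by
    refine le_antisymm ?_ (mul_nonneg hp0 (hS.positive _ (mul_nonneg h1p0 hx0)))
    calc p * S ((1 - p) * x) ≤ p * ((n:ℝ) • (1 - p)) := mul_mono hp0 hX
      _ = (n:ℝ) • (p * (1 - p)) := mul_natCast_smul n _ _
      _ = 0 := by rw [hp2, smul_zero]
  have hsum : S x = S (p * x) + S ((1 - p) * x) := by
    rw [← map_add]
    congr 1
    ring
  calc S (p * x) = p * S (p * x) + p * S ((1 - p) * x) := by rw [← hC, hD, add_zero]
    _ = p * (S (p * x) + S ((1 - p) * x)) := by ring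
    _ = p * S x := by rw [← hsum]

lemma comp_mul (hE : IsRieszSubspace E) (hT : IsCondExpOn E T)
    (hTU : TUniversallyComplete E T) (hS : IsCondExpOn E S) {p : A} (hpS : S p = p)
    (hp0 : 0 ≤ p) (hp1 : p ≤ 1) (hpp : p ⊓ (1 - p) = 0) {z : A} (hzE : z ∈ E) :
    S (p * z) = p * S z := by
  have hpos : ∀ z : A, z ∈ E → 0 ≤ z → S (p * z) = p * S z := by
    intro z hzE hz0
    have hlubD := isLUB_trunc hE hT hTU hz0 hzE
    have htmono : Monotone (fun n : ℕ => z ⊓ ((n:ℝ) • (1:A))) := fun i j hij =>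
      inf_le_inf_left z (smul_le_smul_right (by exact_mod_cast hij) one_nonneg)
    have hlub1 : IsLUB (Set.range fun n : ℕ => p * (z ⊓ ((n:ℝ) • (1:A)))) (p * z) :=
      isLUB_mul_range hp0 hp1 hlubD
    have hmono1 : Monotone (fun n : ℕ => p * (z ⊓ ((n:ℝ) • (1:A)))) := fun i j hij =>
      mul_mono hp0 (htmono hij)
    have h2 := hS.orderCont _ _ (Set.range_nonempty _) (directedOn_range.mpr hmono1.directed_le) hlub1
    have h3 := hS.orderCont _ _ (Set.range_nonempty _) (directedOn_range.mpr htmono.directed_le) hlubD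
    have he2 : S '' (Set.range fun n : ℕ => p * (z ⊓ ((n:ℝ) • (1:A)))) =
        Set.range fun n : ℕ => p * S (z ⊓ ((n:ℝ) • (1:A))) := by
      have hcomp : (S ∘ fun n : ℕ => p * (z ⊓ ((n:ℝ) • (1:A)))) =
          fun n : ℕ => p * S (z ⊓ ((n:ℝ) • (1:A))) := by
        funext n
        exact comp_mul_bounded hS hpS hp0 hp1 hpp
          (le_inf hz0 (smul_nonneg (by positivity) one_nonneg) : (0:A) ≤ z ⊓ ((n:ℝ) • (1:A)))
          (inf_le_right)
      rw [← Set.range_comp, hcomp]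
    have he3 : S '' (Set.range fun n : ℕ => z ⊓ ((n:ℝ) • (1:A))) =
        Set.range fun n : ℕ => S (z ⊓ ((n:ℝ) • (1:A))) := by
      rw [← Set.range_comp]; rfl
    rw [he2] at h2
    rw [he3] at h3
    have h4 : IsLUB (Set.range fun n : ℕ => p * S (z ⊓ ((n:ℝ) • (1:A)))) (p * S z) := by
      have := isLUB_mul_range hp0 hp1 h3
      exact this
    exact h2.unique h4
  have hdec : z = z⁺ - z⁻ := (posPart_sub_negPart z).symm
  have h1 := hpos (z⁺) (posPart_mem hE hzE) (posPart_nonneg z)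
  have h2 := hpos (z⁻) (negPart_mem hE hzE) (negPart_nonneg z)
  calc S (p * z) = S (p * z⁺ - p * z⁻) := by rw [← mul_sub, posPart_sub_negPart]
    _ = S (p * z⁺) - S (p * z⁻) := map_sub S _ _
    _ = p * S z⁺ - p * S z⁻ := by rw [h1, h2]
    _ = p * (S z⁺ - S z⁻) := by ring
    _ = p * S z := by rw [← map_sub, posPart_sub_negPart]

lemma smul_sup_of_pos {r : ℝ} (hr : 0 < r) (a b : A) : r • (a ⊔ b) = (r • a) ⊔ (r • b) := by
  refine le_antisymm ?_ (sup_le (smul_mono hr.le le_sup_left) (smul_mono hr.le le_sup_right))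
  have h : a ⊔ b ≤ r⁻¹ • ((r • a) ⊔ (r • b)) := by
    refine sup_le ?_ ?_
    · have := smul_mono (r := r⁻¹) (by positivity) (le_sup_left (a := r • a) (b := r • b))
      rwa [smul_smul, inv_mul_cancel₀ hr.ne', one_smul] at this
    · have := smul_mono (r := r⁻¹) (by positivity) (le_sup_right (a := r • a) (b := r • b))
      rwa [smul_smul, inv_mul_cancel₀ hr.ne', one_smul] at this
  have h2 := smul_mono hr.le h
  rwa [smul_smul, mul_inv_cancel₀ hr.ne', one_smul] at h2

lemma smul_abs_of_pos {r : ℝ} (hr : 0 < r) (a : A) : |r • a| = r • |a| := by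
  rw [abs_eq, abs_eq, smul_sup_of_pos hr, smul_neg]

lemma abs_sub_le' (a b : A) : |a - b| ≤ |a| + |b| := by
  rw [abs_le_iff']
  constructor
  · have h := add_le_add (le_abs_self a) (neg_le_abs b)
    calc a - b = a + -b := sub_eq_add_neg a b
      _ ≤ |a| + |b| := h
  · rw [neg_sub]
    have h := add_le_add (le_abs_self b) (neg_le_abs a)
    calc b - a = b + -a := sub_eq_add_neg b a
      _ ≤ |b| + |a| := h
      _ = |a| + |b| := add_comm _ _

/-- Averaging over `S` for `w` in the range of `S` with `0 ≤ w ≤ m • 1`. -/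
lemma avg_bounded (hE : IsRieszSubspace E) (hT : IsCondExpOn E T)
    (hTU : TUniversallyComplete E T) (hS : IsCondExpOn E S) {w x : A} (hwE : w ∈ E)
    (hwS : S w = w) (hw0 : 0 ≤ w) {m : ℕ} (hwm : w ≤ (m:ℝ) • (1:A)) (hxE : x ∈ E) :
    S (x * w) = w * S x := by
  set D : A := S (x * w) - w * S x with hD
  set c : A := |D| with hc
  set y : A := S |x| + S |x| with hy
  have hyE : y ∈ E := hE.add_mem _ _ (hS.mapsTo _ (abs_mem hE hxE)) (hS.mapsTo _ (abs_mem hE hxE))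
  have hkey : ∀ M : ℕ, 0 < M → (M:ℝ) • c ≤ y := by
    intro M hM
    set N : ℕ := M * m with hN
    set z : A := (M:ℝ) • w with hz
    have hz0 : (0:A) ≤ z := smul_nonneg (by positivity) hw0
    have hzE : z ∈ E := hE.smul_mem _ _ hwE
    have hzS : S z = z := by rw [hz, map_smul, hwS]
    have hzN : z ≤ (N:ℝ) • (1:A) := by
      rw [hz, hN]
      have := smul_mono (r := (M:ℝ)) (by positivity) hwm
      rwa [smul_smul, ← Nat.cast_mul] at this
    set u : ℕ → A := fun n => (z - (n:ℝ) • (1:A))⁺ with hu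
    set e : ℕ → A := fun n => u n ⊓ 1 with he
    have hu0 : ∀ n, 0 ≤ u n := fun n => posPart_nonneg _
    have huE : ∀ n, u n ∈ E := fun n => posPart_mem hE (sub_mem hE hzE (smul_one_mem hE _))
    have huS : ∀ n, S (u n) = u n := fun n =>
      fix_posPart hS (by rw [map_sub, hzS, fix_smul_one hS])
    have he0 : ∀ n, 0 ≤ e n := fun n => le_inf (hu0 n) one_nonneg
    have he1 : ∀ n, e n ≤ 1 := fun n => inf_le_right
    have hesum : ∑ i ∈ Finset.range N, e i = z := by
      rw [he]
      have := (trunc_sum z hz0 N).symm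
      rwa [inf_eq_left.mpr hzN] at this
    have H : ∀ n : ℕ, ∃ p : A, p ∈ E ∧ S p = p ∧ 0 ≤ p ∧ p ≤ 1 ∧
        IsLUB (Set.range fun j : ℕ => ((j:ℝ) • (u (n+1))) ⊓ 1) p ∧
        p ⊓ (1 - p) = 0 ∧ u (n+1) ⊓ (1 - p) = 0 ∧ p * u (n+1) = u (n+1) ∧
        (∀ v, 0 ≤ v → u (n+1) ⊓ v = 0 → p ⊓ v = 0 ∧ p * v = 0) :=
      fun n => comp_exists hE hT hTU hS (hu0 (n+1)) (huE (n+1)) (huS (n+1))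
    choose p hpE hpS hp0 hp1 hplub hppc hpuo hpu hpv using H
    have hep : ∀ n, e (n+1) ≤ p n := by
      intro n
      have hmem := (hplub n).1 ⟨1, rfl⟩
      simpa using hmem
    have hpe : ∀ n, p n ≤ e n := by
      intro n
      apply (hplub n).2
      rintro L ⟨j, rfl⟩
      set a : A := z - ((n+1 : ℕ):ℝ) • (1:A) with ha
      have hua : u (n+1) = a⁺ := rfl
      have hL1 : (((j:ℝ) • u (n+1)) ⊓ 1) ⊓ a⁻ = 0 := by
        refine le_antisymm ?_ (le_inf (le_inf (smul_nonneg (by positivity) (hu0 _)) one_nonneg)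
          (negPart_nonneg a))
        calc (((j:ℝ) • u (n+1)) ⊓ 1) ⊓ a⁻ ≤ ((j:ℝ) • u (n+1)) ⊓ a⁻ :=
              inf_le_inf_right _ inf_le_left
          _ = 0 := by
              rw [hua]
              exact inf_nsmul_eq_zero (posPart_nonneg a) (negPart_nonneg a)
                (posPart_inf_negPart_eq_zero a) j
      set L : A := ((j:ℝ) • u (n+1)) ⊓ 1 with hLdef
      have hL0 : 0 ≤ L := le_inf (smul_nonneg (by positivity) (hu0 _)) one_nonneg
      have hL2 : L ⊓ (a⁻ ⊓ 1) = 0 := by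
        refine le_antisymm ?_ (le_inf hL0 (le_inf (negPart_nonneg a) one_nonneg))
        calc L ⊓ (a⁻ ⊓ 1) ≤ L ⊓ a⁻ := inf_le_inf_left L inf_le_left
          _ = 0 := hL1
      have hL3 : L + a⁻ ⊓ 1 ≤ 1 := by
        rw [add_eq_sup_of_inf_eq_zero hL2]
        exact sup_le inf_le_right inf_le_right
      have hL4 : L ≤ (1 - a⁻)⁺ := by
        have h4 : L ≤ 1 - a⁻ ⊓ 1 := le_sub_iff_add_le.mpr hL3
        have h5 : (1:A) - a⁻ ⊓ 1 = (1 - a⁻)⁺ := by rw [sub_inf, sub_self, posPart_def]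
        rwa [h5] at h4
      have hL5 : (1 - a⁻)⁺ ≤ u n := by
        have h6 : (1:A) - a⁻ ≤ 1 + a := by
          have h7 : (1:A) + a = 1 - a⁻ + a⁺ := by
            nth_rewrite 1 [← posPart_sub_negPart a]
            abel
          rw [h7]
          exact le_add_of_nonneg_right (posPart_nonneg a)
        have h8 : (1:A) + a = z - (n:ℝ) • (1:A) := by
          rw [ha]; push_cast; rw [add_smul, one_smul]; abel
        calc (1 - a⁻)⁺ ≤ (1 + a)⁺ := posPart_mono h6
          _ = u n := by show (1 + a)⁺ = (z - (n:ℝ) • (1:A))⁺; rw [h8]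
      exact le_inf (hL4.trans hL5) inf_le_right
    set Q : A := ∑ n ∈ Finset.range N, p n with hQ
    have hQz : Q ≤ z := by
      rw [hQ, ← hesum]
      exact sum_le_sum'' hpe
    have hzQ : z - 1 ≤ Q := by
      have h1 : ∑ n ∈ Finset.range N, e (n+1) ≤ Q := sum_le_sum'' hep
      have h2 : ∑ i ∈ Finset.range (N+1), e i = ∑ n ∈ Finset.range N, e (n+1) + e 0 :=
        Finset.sum_range_succ' e N
      have h3 : ∑ i ∈ Finset.range (N+1), e i = z + e N := by
        rw [Finset.sum_range_succ, hesum]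
      have h4 : z + e N - e 0 = ∑ n ∈ Finset.range N, e (n+1) := by
        rw [← h3, h2]; abel
      have h5 : z - 1 ≤ z + e N - e 0 := by
        have := he1 0
        have h6 := he0 N
        have : z - 1 + (e N + (1 - e 0)) = z + e N - e 0 := by abel
        rw [← this]
        exact le_add_of_nonneg_right (add_nonneg h6 (sub_nonneg.mpr (he1 0)))
      rw [h4] at h5
      exact h5.trans h1
    set d : A := z - Q with hd2
    have hd0 : 0 ≤ d := sub_nonneg.mpr hQz
    have hd1 : d ≤ 1 := by
      rw [hd2]
      have := sub_le_sub_left hzQ z  -- z - Q ≤ z - (z - 1)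
      calc z - Q ≤ z - (z - 1) := sub_le_sub_left hzQ z
        _ = 1 := by abel
    have hSQ : S (x * Q) = Q * S x := by
      rw [hQ, Finset.mul_sum, map_sum, Finset.sum_mul]
      congr 1
      funext n
      rw [mul_comm x (p n), comp_mul hE hT hTU hS (hpS n) (hp0 n) (hp1 n) (hppc n) hxE,
        mul_comm]
    have hDz : (M:ℝ) • D = S (x * d) - d * S x := by
      have h1 : x * z = x * d + x * Q := by rw [hd2]; ring
      have h2 : z * S x = d * S x + Q * S x := by rw [hd2]; ring
      have h3 : S (x * z) - z * S x = S (x * d) - d * S x := by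
        rw [h1, map_add, h2, hSQ]; abel
      rw [← h3, hD, smul_sub, hz]
      rw [mul_natCast_smul M x w, map_smul]
      congr 1
      conv_rhs => rw [mul_comm ((M:ℝ) • w) (S x), mul_natCast_smul M (S x) w, mul_comm (S x) w]
    have habs : |S (x * d) - d * S x| ≤ y := by
      refine (abs_sub_le' _ _).trans ?_
      rw [hy]
      apply add_le_add
      · refine (abs_map_le hS _).trans ?_
        have h1 : |x * d| ≤ |x| * d := abs_mul_le hd0
        have h2 : |x| * d ≤ |x| * 1 := mul_mono (abs_nonneg x) hd1
        rw [mul_one] at h2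
        exact Tmono hS (h1.trans h2)
      · have h1 : |d * S x| ≤ |S x| * d := by rw [mul_comm]; exact abs_mul_le hd0
        have h2 : |S x| * d ≤ |S x| * 1 := mul_mono (abs_nonneg _) hd1
        rw [mul_one] at h2
        exact (h1.trans h2).trans (abs_map_le hS x)
    calc (M:ℝ) • c = |(M:ℝ) • D| := by
          rw [hc, smul_abs_of_pos (by exact_mod_cast hM)]
      _ = |S (x * d) - d * S x| := by rw [hDz]
      _ ≤ y := habs
  have hc0 : 0 ≤ c := abs_nonneg D
  have harch : ∀ n : ℕ, (n:ℝ) • c ≤ y := by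
    intro n
    have h1 : (n:ℝ) • c ≤ ((2^n : ℕ):ℝ) • c :=
      smul_le_smul_right (by exact_mod_cast (Nat.lt_two_pow_self (n := n)).le) hc0
    exact h1.trans (hkey (2^n) (by positivity))
  have := arch hE hT hTU hc0 hyE harch
  rw [hc] at this
  have hD0 : D = 0 := eq_zero_of_abs_eq_zero this
  rw [hD] at hD0
  exact sub_eq_zero.mp hD0

lemma isLUB_mul_trunc (hE : IsRieszSubspace E) (hT : IsCondExpOn E T)
    (hTU : TUniversallyComplete E T) (hS : IsCondExpOn E S) {w : A} (hwE : w ∈ E)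
    (hwS : S w = w) (hw0 : 0 ≤ w) {f : A} (hf0 : 0 ≤ f) :
    IsLUB (Set.range fun n : ℕ => f * (w ⊓ ((n:ℝ) • (1:A)))) (f * w) := by
  set u : ℕ → A := fun m => (w - (m:ℝ) • (1:A))⁺ with hu
  have hu0 : ∀ m, 0 ≤ u m := fun m => posPart_nonneg _
  have huE : ∀ m, u m ∈ E := fun m => posPart_mem hE (sub_mem hE hwE (smul_one_mem hE _))
  have huS : ∀ m, S (u m) = u m := fun m =>
    fix_posPart hS (by rw [map_sub, hwS, fix_smul_one hS])
  have H : ∀ m : ℕ, ∃ p : A, p ∈ E ∧ S p = p ∧ 0 ≤ p ∧ p ≤ 1 ∧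
      IsLUB (Set.range fun j : ℕ => ((j:ℝ) • (u m)) ⊓ 1) p ∧
      p ⊓ (1 - p) = 0 ∧ u m ⊓ (1 - p) = 0 ∧ p * u m = u m ∧
      (∀ v, 0 ≤ v → u m ⊓ v = 0 → p ⊓ v = 0 ∧ p * v = 0) :=
    fun m => comp_exists hE hT hTU hS (hu0 m) (huE m) (huS m)
  choose p hpE hpS hp0 hp1 hplub hppc hpuo hpu hpv using H
  constructor
  · rintro t ⟨n, rfl⟩
    exact mul_mono hf0 inf_le_left
  · intro b hb
    set c : A := (f * w - b)⁺ with hcdef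
    have hc0 : 0 ≤ c := posPart_nonneg _
    have hkey : ∀ m : ℕ, c ≤ f * u m := by
      intro m
      have h1 : f * w - b ≤ f * (u m) := by
        have h2 : f * w - f * (w ⊓ ((m:ℝ) • (1:A))) = f * u m := by
          rw [← mul_sub, sub_inf_eq_posPart]
        calc f * w - b ≤ f * w - f * (w ⊓ ((m:ℝ) • (1:A))) :=
              sub_le_sub_left (hb ⟨m, rfl⟩) _
          _ = f * u m := h2
      have h3 : c ≤ (f * u m)⁺ := posPart_mono h1
      rwa [posPart_eq_of_nonneg (mul_nonneg hf0 (hu0 m))] at h3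
    have hco : ∀ m : ℕ, (1 - p m) ⊓ c = 0 := by
      intro m
      have h1p0 : (0:A) ≤ 1 - p m := sub_nonneg.mpr (hp1 m)
      refine le_antisymm ?_ (le_inf h1p0 hc0)
      have h1 : (u m * f) ⊓ (1 - p m) = 0 :=
        FRieszSpace.inf_mul_orth (u m) (1 - p m) f hf0 (hpuo m)
      calc (1 - p m) ⊓ c ≤ (1 - p m) ⊓ (f * u m) := inf_le_inf_left _ (hkey m)
        _ = (u m * f) ⊓ (1 - p m) := by rw [inf_comm, mul_comm]
        _ = 0 := h1
    have hr : IsLUB (Set.range fun m : ℕ => (1:A) - p m) 1 := by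
      constructor
      · rintro t ⟨m, rfl⟩
        exact sub_le_self 1 (hp0 m)
      · intro b' hb'
        have h1 : ∀ m : ℕ, (1 - b')⁺ ≤ p m := by
          intro m
          have h2 : (1:A) - b' ≤ p m := by
            have := hb' ⟨m, rfl⟩
            have h3 := sub_le_sub_left this 1
            calc (1:A) - b' ≤ 1 - (1 - p m) := h3
              _ = p m := by abel
          have h4 : ((1:A) - b')⁺ ≤ (p m)⁺ := posPart_mono h2
          rwa [posPart_eq_of_nonneg (hp0 m)] at h4
        have hmp : ∀ m : ℕ, (m:ℝ) • p m ≤ w := by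
          intro m
          have h5 : p m * (w - (m:ℝ) • (1:A)) = u m := by
            nth_rewrite 1 [← posPart_sub_negPart (w - (m:ℝ) • (1:A))]
            rw [mul_sub, hpu m,
              (hpv m _ (negPart_nonneg _) (posPart_inf_negPart_eq_zero _)).2, sub_zero]
          have h6 : p m * w - (m:ℝ) • p m = u m := by
            rw [← h5, mul_sub, mul_natCast_smul, mul_one]
          have h7 : (m:ℝ) • p m ≤ p m * w := by
            have h8 := hu0 m
            rw [← h6] at h8
            exact sub_nonneg.mp h8
          have h9 : p m * w ≤ w := by
            have h10 : w - p m * w = (1 - p m) * w := by ring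
            have h11 : (0:A) ≤ (1 - p m) * w :=
              mul_nonneg (sub_nonneg.mpr (hp1 m)) hw0
            rw [← h10] at h11
            exact sub_nonneg.mp h11
          exact h7.trans h9
        have harch : ∀ n : ℕ, (n:ℝ) • (1 - b')⁺ ≤ w := by
          intro n
          exact (smul_mono (by positivity) (h1 n)).trans (hmp n)
        have h12 : (1 - b')⁺ = 0 := arch hE hT hTU (posPart_nonneg _) hwE harch
        have h13 : (1:A) - b' ≤ 0 := posPart_eq_zero.mp h12
        have := sub_nonpos.mp h13
        exact this
    have hlubc := isLUB_inf_range c hr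
    have hzero : (fun m : ℕ => ((1:A) - p m) ⊓ c) = fun _ : ℕ => (0:A) := funext hco
    rw [hzero, Set.range_const] at hlubc
    have h1c : (1:A) ⊓ c = 0 := hlubc.unique isLUB_singleton
    have hceq : c = 0 := eq_zero_of_inf_one_eq_zero hc0 (by rw [inf_comm]; exact h1c)
    have : f * w - b ≤ 0 := posPart_eq_zero.mp hceq
    exact sub_nonpos.mp this

/-- The averaging identity. -/
lemma avg (hE : IsRieszSubspace E) (hT : IsCondExpOn E T) (hTU : TUniversallyComplete E T)
    (hS : IsCondExpOn E S) {w f : A} (hwE : w ∈ E) (hwS : S w = w) (hfE : f ∈ E) :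
    S (f * w) = w * S f := by
  have hpos : ∀ w f : A, w ∈ E → S w = w → 0 ≤ w → f ∈ E → 0 ≤ f →
      S (f * w) = w * S f := by
    intro w f hwE hwS hw0 hfE hf0
    have hSf0 : 0 ≤ S f := hS.positive f hf0
    have heach : ∀ n : ℕ, S (f * (w ⊓ ((n:ℝ) • (1:A)))) = (w ⊓ ((n:ℝ) • (1:A))) * S f := by
      intro n
      have h1 : w ⊓ ((n:ℝ) • (1:A)) ∈ E := inf_mem hE hwE (smul_one_mem hE _)
      have h2 : S (w ⊓ ((n:ℝ) • (1:A))) = w ⊓ ((n:ℝ) • (1:A)) :=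
        fix_inf hS hwS (fix_smul_one hS _)
      have h3 : (0:A) ≤ w ⊓ ((n:ℝ) • (1:A)) :=
        le_inf hw0 (smul_nonneg (by positivity) one_nonneg)
      exact avg_bounded hE hT hTU hS h1 h2 h3 (m := n) inf_le_right hfE
    have hlubA := isLUB_mul_trunc hE hT hTU hS hwE hwS hw0 hf0
    have htmono : Monotone (fun n : ℕ => w ⊓ ((n:ℝ) • (1:A))) := fun i j hij =>
      inf_le_inf_left w (smul_le_smul_right (by exact_mod_cast hij) one_nonneg)
    have hmonoA : Monotone (fun n : ℕ => f * (w ⊓ ((n:ℝ) • (1:A)))) := fun i j hij =>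
      mul_mono hf0 (htmono hij)
    have h2 := hS.orderCont _ _ (Set.range_nonempty _)
      (directedOn_range.mpr hmonoA.directed_le) hlubA
    have himg : S '' (Set.range fun n : ℕ => f * (w ⊓ ((n:ℝ) • (1:A)))) =
        Set.range fun n : ℕ => S f * (w ⊓ ((n:ℝ) • (1:A))) := by
      have hcomp : (S ∘ fun n : ℕ => f * (w ⊓ ((n:ℝ) • (1:A)))) =
          fun n : ℕ => S f * (w ⊓ ((n:ℝ) • (1:A))) := by
        funext n
        show S (f * (w ⊓ ((n:ℝ) • (1:A)))) = S f * (w ⊓ ((n:ℝ) • (1:A)))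
        rw [heach n, mul_comm]
      rw [← Set.range_comp, hcomp]
    rw [himg] at h2
    have hlubB := isLUB_mul_trunc hE hT hTU hS hwE hwS hw0 hSf0
    have := h2.unique hlubB
    rw [this, mul_comm]
  have hw_pp : S (w⁺) = w⁺ := fix_posPart hS hwS
  have hw_np : S (w⁻) = w⁻ := fix_negPart hS hwS
  have hw_ppE : w⁺ ∈ E := posPart_mem hE hwE
  have hw_npE : w⁻ ∈ E := negPart_mem hE hwE
  have hf_ppE : f⁺ ∈ E := posPart_mem hE hfE
  have hf_npE : f⁻ ∈ E := negPart_mem hE hfE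
  have e1 := hpos (w⁺) (f⁺) hw_ppE hw_pp (posPart_nonneg w) hf_ppE (posPart_nonneg f)
  have e2 := hpos (w⁻) (f⁺) hw_npE hw_np (negPart_nonneg w) hf_ppE (posPart_nonneg f)
  have e3 := hpos (w⁺) (f⁻) hw_ppE hw_pp (posPart_nonneg w) hf_npE (negPart_nonneg f)
  have e4 := hpos (w⁻) (f⁻) hw_npE hw_np (negPart_nonneg w) hf_npE (negPart_nonneg f)
  have hfw : f * w = f⁺ * w⁺ - f⁺ * w⁻ - f⁻ * w⁺ + f⁻ * w⁻ := by
    nth_rewrite 1 [← posPart_sub_negPart f, ← posPart_sub_negPart w]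
    ring
  have hSf : S f = S (f⁺) - S (f⁻) := by
    rw [← map_sub, posPart_sub_negPart]
  calc S (f * w) = S (f⁺ * w⁺) - S (f⁺ * w⁻) - S (f⁻ * w⁺) + S (f⁻ * w⁻) := by
        rw [hfw, map_add, map_sub, map_sub]
    _ = w⁺ * S (f⁺) - w⁻ * S (f⁺) - w⁺ * S (f⁻) + w⁻ * S (f⁻) := by
        rw [e1, e2, e3, e4]
    _ = (w⁺ - w⁻) * (S (f⁺) - S (f⁻)) := by ring
    _ = w * S f := by rw [posPart_sub_negPart, ← hSf]

end main

end FR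

/-- For conditional expectations `S`, `J` commuting with `T`, with `JS = J = SJ`:
`S(f · Jg) = Jg · S f` for all `f, g ∈ L²(T)`. -/
theorem condexp_averaging_L2 {A : Type*} [FRieszSpace A] (E : Set A) (hE : IsRieszSubspace E)
    (T : A →ₗ[ℝ] A) (hT : IsCondExpOn E T) (hTsp : StrictlyPositive T)
    (hTU : TUniversallyComplete E T)
    (S J : A →ₗ[ℝ] A) (hS : IsCondExpOn E S) (hJ : IsCondExpOn E J)
    (hTS : T.comp S = T) (hST : S.comp T = T)
    (hTJ : T.comp J = T) (hJT : J.comp T = T)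
    (hJS : J.comp S = J) (hSJ : S.comp J = J)
    (f g : A) (hf : f ∈ L2 E) (hg : g ∈ L2 E) :
    S (f * J g) = J g * S f := by
  have hw : S (J g) = J g := by
    have h := LinearMap.congr_fun hSJ g
    simpa using h
  exact FR.avg hE hT hTU hS (hJ.mapsTo g hg.1) hw hf.1
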